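/- Let H=(V,E,w) be a directed hypergraph with vertex weights ω, and let Ĥ=(V̂,Ê) be its transformation to a directed normal graph: V̂ := V ∪ {vₑᵗ, vₑʰ : e ∈ E} where each new vertex has weight 0 and old vertices keep their weights; Ê := {(vₑᵗ, vₑʰ) : e ∈ E} ∪ {(u, vₑᵗ) : e ∈ E, u ∈ Tₑ} ∪ {(vₑʰ, v) : e ∈ E, v ∈ Hₑ}, where edge (vₑᵗ, vₑʰ) has weight wₑ and all other edges have weight 𝔐 := n·Σ_{e∈E} wₑ. For S ⊆ V define Ŝ := S ∪ {vₑᵗ : S ∩ Tₑ ≠ ∅} ∪ {vₑʰ : Hₑ ⊆ S}. Then for every S ⊆ V: ω(S) = ω(Ŝ) and w(∂⁺(S)) = w(∂̂⁺(Ŝ)), where ∂̂⁺ denotes the out-going cut in Ĥ. -/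
import Mathlib

open Finset

/-- Edge-weight function of the directed normal graph `Ĥ` obtained from a directed
hypergraph: vertices are `V ⊕ E × Bool` where `Sum.inr (e, false)` is the tail-vertex
`vₑᵗ` and `Sum.inr (e, true)` is the head-vertex `vₑʰ` of edge `e`.  The edge
`(vₑᵗ, vₑʰ)` has weight `w e`; edges `(u, vₑᵗ)` for `u ∈ Tₑ` and `(vₑʰ, u)` for
`u ∈ Hₑ` have the large weight `M`; all other (non-)edges have weight `0`. -/
def hatw {V E : Type*} [DecidableEq V] [DecidableEq E]
    (Tl Hd : E → Finset V) (w : E → ℝ) (M : ℝ) :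
    V ⊕ E × Bool → V ⊕ E × Bool → ℝ
  | Sum.inr (e, false), Sum.inr (e', true) => if e = e' then w e else 0
  | Sum.inl u, Sum.inr (e, false) => if u ∈ Tl e then M else 0
  | Sum.inr (e, true), Sum.inl u => if u ∈ Hd e then M else 0
  | _, _ => 0

/-- The transformed subset `Ŝ = S ∪ {vₑᵗ : S ∩ Tₑ ≠ ∅} ∪ {vₑʰ : Hₑ ⊆ S}`. -/
def hatS {V E : Type*} [Fintype E] [DecidableEq V] [DecidableEq E]
    (Tl Hd : E → Finset V) (S : Finset V) : Finset (V ⊕ E × Bool) :=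
  S.image Sum.inl ∪
    (Finset.univ.filter (fun e => (Tl e ∩ S).Nonempty)).image (fun e => Sum.inr (e, false)) ∪
    (Finset.univ.filter (fun e => Hd e ⊆ S)).image (fun e => Sum.inr (e, true))

/-- Core weight: only the `(vₑᵗ, vₑʰ)` edges. -/
def cw {V E : Type*} [DecidableEq E] (w : E → ℝ) :
    V ⊕ E × Bool → V ⊕ E × Bool → ℝ
  | Sum.inr (e, false), Sum.inr (e', true) => if e = e' then w e else 0
  | _, _ => 0

section aux
variable {V E : Type*} [DecidableEq E] (w : E → ℝ)

@[simp] lemma cw_inl_left (u : V) (y : V ⊕ E × Bool) : cw w (Sum.inl u) y = 0 := by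
  rcases y with u' | ⟨e, b⟩
  · rfl
  · cases b <;> rfl

@[simp] lemma cw_true_left (e : E) (y : V ⊕ E × Bool) :
    cw (V := V) w (Sum.inr (e, true)) y = 0 := by
  rcases y with u' | ⟨e', b⟩
  · rfl
  · cases b <;> rfl

@[simp] lemma cw_false_inl (e : E) (u : V) :
    cw w (Sum.inr (e, false)) (Sum.inl u) = 0 := rfl

@[simp] lemma cw_false_false (e e' : E) :
    cw (V := V) w (Sum.inr (e, false)) (Sum.inr (e', false)) = 0 := rfl

@[simp] lemma cw_false_true (e e' : E) :
    cw (V := V) w (Sum.inr (e, false)) (Sum.inr (e', true)) = if e = e' then w e else 0 := rfl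

end aux

section aux2
variable {V E : Type*} [Fintype E] [DecidableEq V] [DecidableEq E]
    (Tl Hd : E → Finset V) (S : Finset V)

lemma mem_hatS_inl (u : V) : Sum.inl u ∈ hatS Tl Hd S ↔ u ∈ S := by
  simp [hatS]

lemma mem_hatS_inr_false (e : E) :
    Sum.inr (e, false) ∈ hatS Tl Hd S ↔ (Tl e ∩ S).Nonempty := by
  simp [hatS]

lemma mem_hatS_inr_true (e : E) :
    Sum.inr (e, true) ∈ hatS Tl Hd S ↔ Hd e ⊆ S := by
  simp [hatS]

end aux2

/-- Reduction to directed normal graphs, first part of Fact 1.1: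
for every `S ⊆ V`, the transformed subset `Ŝ` has the same weight, and the weight of the
out-going cut of `S` in the hypergraph `H` equals that of `Ŝ` in the normal graph `Ĥ`. -/
theorem reduction_to_normal_graph_forward
    {V E : Type*} [Fintype V] [Fintype E] [DecidableEq V] [DecidableEq E]
    (Tl Hd : E → Finset V) (hTl : ∀ e, (Tl e).Nonempty) (hHd : ∀ e, (Hd e).Nonempty)
    (w : E → ℝ) (hw : ∀ e, 0 ≤ w e)
    (ω : V → ℝ) (hω : ∀ u, 0 ≤ ω u)
    (M : ℝ) (hM : M = (Fintype.card V : ℝ) * ∑ e, w e)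
    (S : Finset V) :
    (∑ u ∈ S, ω u) = (∑ x ∈ hatS Tl Hd S, Sum.elim ω (fun _ => (0 : ℝ)) x) ∧
    (∑ e ∈ univ.filter (fun e => (Tl e ∩ S).Nonempty ∧ (Hd e \ S).Nonempty), w e)
      = ∑ x ∈ hatS Tl Hd S, ∑ y ∈ (hatS Tl Hd S)ᶜ, hatw Tl Hd w M x y := by
  set A := hatS Tl Hd S with hAdef
  constructor
  · have himg : ∑ x ∈ S.image (Sum.inl : V → V ⊕ E × Bool), Sum.elim ω (fun _ => (0:ℝ)) x = ∑ u ∈ S, ω u :=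
      Finset.sum_image (s := S) (g := (Sum.inl : V → V ⊕ E × Bool)) (f := Sum.elim ω (fun _ => (0:ℝ)))
        (fun a _ b _ h => Sum.inl.inj h)
    rw [← himg]
    apply Finset.sum_subset
    · intro x hx
      rw [hAdef, hatS]
      exact Finset.mem_union_left _ (Finset.mem_union_left _ hx)
    · intro x hxA hx
      rcases x with u | ⟨e, b⟩
      · exact absurd ((mem_hatS_inl Tl Hd S u).1 hxA)
          (fun hu => hx (Finset.mem_image_of_mem _ hu))
      · simp
  · have key : ∀ x ∈ A, ∀ y ∈ Aᶜ, hatw Tl Hd w M x y = cw w x y := by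
      intro x hx y hy
      rw [Finset.mem_compl] at hy
      match x, y with
      | Sum.inl u, Sum.inr (e, false) =>
        show (if u ∈ Tl e then M else 0) = 0
        rw [if_neg]
        intro hu
        exact hy ((mem_hatS_inr_false Tl Hd S e).2
          ⟨u, Finset.mem_inter.2 ⟨hu, (mem_hatS_inl Tl Hd S u).1 hx⟩⟩)
      | Sum.inr (e, true), Sum.inl u =>
        show (if u ∈ Hd e then M else 0) = 0
        rw [if_neg]
        intro hu
        exact hy (hAdef ▸ (mem_hatS_inl Tl Hd S u).2
          ((mem_hatS_inr_true Tl Hd S e).1 hx hu))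
      | Sum.inr (e, false), Sum.inr (e', true) => rfl
      | Sum.inl u, Sum.inl u' => rfl
      | Sum.inl u, Sum.inr (e, true) => rfl
      | Sum.inr (e, false), Sum.inl u => rfl
      | Sum.inr (e, b), Sum.inr (e', false) => cases b <;> rfl
      | Sum.inr (e, true), Sum.inr (e', true) => rfl
    rw [Finset.sum_congr rfl (fun x hx => Finset.sum_congr rfl (fun y hy => key x hx y hy))]
    have hsum : ∀ (B : Finset (V ⊕ E × Bool)) (g : V ⊕ E × Bool → ℝ),
        ∑ x ∈ B, g x = ∑ x, if x ∈ B then g x else 0 := fun B g => by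
      rw [Finset.sum_ite_mem, Finset.univ_inter]
    rw [hsum A]
    simp only [hsum Aᶜ]
    simp only [Fintype.sum_sum_type, Fintype.sum_prod_type, Fintype.sum_bool,
      cw_inl_left, cw_true_left, cw_false_inl, cw_false_false, cw_false_true,
      ite_self, Finset.sum_const_zero, add_zero, zero_add, Finset.mem_compl]
    rw [Finset.sum_filter]
    apply Finset.sum_congr rfl
    intro e _
    have hinner : (∑ e' : E, if Sum.inr (α := V) (e', true) ∉ A then if e = e' then w e else 0 else 0)
        = if Sum.inr (α := V) (e, true) ∉ A then w e else 0 := by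
      rw [Finset.sum_eq_single e]
      · simp
      · intro e' _ hne
        simp [Ne.symm hne]
      · simp
    rw [hinner]
    simp only [hAdef, mem_hatS_inr_false, mem_hatS_inr_true, Finset.sdiff_nonempty]
    by_cases ht : (Tl e ∩ S).Nonempty <;> by_cases hh : Hd e ⊆ S <;> simp [ht, hh]
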